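/- Let Γ be a chordal graph equipped with a perfect elimination ordering on its vertices, and order each edge e by its larger endpoint h(e) (breaking ties by the smaller endpoint t(e)). Then a set S of edges is an nbc set (contains no broken circuit) if and only if for all distinct edges e, e' in S one has h(e) ≠ h(e'). -/

import Mathlib

open SimpleGraph

section Defs

variable {V : Type*}

/-- The larger endpoint (head) of an edge, with respect to a linear order on vertices. -/
def esup [LinearOrder V] (e : Sym2 V) : V :=
  Sym2.lift ⟨fun a b => a ⊔ b, fun a b => sup_comm a b⟩ e

/-- The smaller endpoint (tail) of an edge. -/
def einf [LinearOrder V] (e : Sym2 V) : V :=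
  Sym2.lift ⟨fun a b => a ⊓ b, fun a b => inf_comm a b⟩ e

/-- The order on edges induced by a linear order on vertices:
`e < e'` iff `h(e) < h(e')`, or `h(e) = h(e')` and `t(e) < t(e')`. -/
def edgeLT [LinearOrder V] (e f : Sym2 V) : Prop :=
  esup e < esup f ∨ (esup e = esup f ∧ einf e < einf f)

/-- The linear order on the vertices is a perfect elimination ordering: every vertex is
simplicial in the induced subgraph on the vertices below it. -/
def IsPEO [LinearOrder V] (G : SimpleGraph V) : Prop :=
  ∀ v u w : V, u < v → w < v → u ≠ w → G.Adj u v → G.Adj w v → G.Adj u w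

/-- A cycle (walk) in a graph has a chord. -/
def SimpleGraph.Walk.HasChord {G : SimpleGraph V} {v : V} (c : G.Walk v v) : Prop :=
  ∃ a b : V, a ∈ c.support ∧ b ∈ c.support ∧ G.Adj a b ∧ s(a, b) ∉ c.edges

/-- A graph is chordal if every cycle with more than three vertices has a chord. -/
def SimpleGraph.IsChordal (G : SimpleGraph V) : Prop :=
  ∀ (v : V) (c : G.Walk v v), c.IsCycle → 3 < c.length → c.HasChord

/-- `S` is the edge set of a cycle of `G`. -/
def IsCycleEdges [DecidableEq V] (G : SimpleGraph V) (S : Finset (Sym2 V)) : Prop :=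
  ∃ (v : V) (c : G.Walk v v), c.IsCycle ∧ c.edges.toFinset = S

/-- `S` is a broken circuit: there is an edge `e` smaller than every element of `S` such that
`S ∪ {e}` is the edge set of a cycle. -/
def IsBrokenCircuit [LinearOrder V] (G : SimpleGraph V) (S : Finset (Sym2 V)) : Prop :=
  ∃ e : Sym2 V, e ∉ S ∧ (∀ f ∈ S, edgeLT e f) ∧ IsCycleEdges G (insert e S)

/-- `S` is an nbc set: a set of edges of `G` no subset of which is a broken circuit. -/
def IsNBC [LinearOrder V] (G : SimpleGraph V) (S : Finset (Sym2 V)) : Prop :=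
  ↑S ⊆ G.edgeSet ∧ ∀ T ⊆ S, ¬IsBrokenCircuit G T

end Defs

section Aux

variable {V : Type*} [LinearOrder V]

@[simp] lemma esup_mk (a b : V) : esup s(a, b) = a ⊔ b := by simp [esup]

@[simp] lemma einf_mk (a b : V) : einf s(a, b) = a ⊓ b := by simp [einf]

lemma esup_mem (e : Sym2 V) : esup e ∈ e := by
  induction e using Sym2.ind with
  | _ a b =>
    rcases le_total a b with h | h
    · rw [esup_mk, sup_eq_right.2 h]; exact Sym2.mem_mk_right a b
    · rw [esup_mk, sup_eq_left.2 h]; exact Sym2.mem_mk_left a b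

lemma le_esup_of_mem {x : V} {e : Sym2 V} (h : x ∈ e) : x ≤ esup e := by
  induction e using Sym2.ind with
  | _ a b =>
    rcases Sym2.mem_iff.mp h with rfl | rfl
    · exact le_sup_left
    · exact le_sup_right

lemma eq_mk_einf_esup (e : Sym2 V) : e = s(einf e, esup e) := by
  induction e using Sym2.ind with
  | _ a b =>
    rcases le_total a b with h | h
    · rw [einf_mk, esup_mk, inf_eq_left.2 h, sup_eq_right.2 h]
    · rw [einf_mk, esup_mk, inf_eq_right.2 h, sup_eq_left.2 h, Sym2.eq_swap]

lemma einf_lt_esup {G : SimpleGraph V} {e : Sym2 V} (h : e ∈ G.edgeSet) :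
    einf e < esup e := by
  induction e using Sym2.ind with
  | _ a b =>
    rw [SimpleGraph.mem_edgeSet] at h
    rw [einf_mk, esup_mk]
    exact inf_lt_sup.2 h.ne

end Aux

section Aux2

variable {W : Type*} {G : SimpleGraph W}

lemma exists_edge_end {x y : W} (p : G.Walk x y) (hp : ¬ p.Nil) :
    ∃ g ∈ p.edges, y ∈ g := by
  have hp' : ¬ p.reverse.Nil := by
    rwa [SimpleGraph.Walk.nil_iff_length_eq, SimpleGraph.Walk.length_reverse,
      ← SimpleGraph.Walk.nil_iff_length_eq]
  obtain ⟨u, h, q, hq⟩ := SimpleGraph.Walk.not_nil_iff.1 hp'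
  refine ⟨s(y, u), ?_, Sym2.mem_mk_left y u⟩
  rw [← List.mem_reverse, ← SimpleGraph.Walk.edges_reverse, hq]
  simp

lemma cycle_two_edges {M : W} {d : G.Walk M M} (hd : d.IsCycle) :
    ∃ g₁ g₂, g₁ ∈ d.edges ∧ g₂ ∈ d.edges ∧ g₁ ≠ g₂ ∧ M ∈ g₁ ∧ M ∈ g₂ := by
  cases d with
  | nil => simpa using hd.three_le_length
  | @cons _ b _ h q =>
    have hq : ¬ q.Nil := by
      have := hd.three_le_length
      rw [SimpleGraph.Walk.nil_iff_length_eq]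
      simp only [SimpleGraph.Walk.length_cons] at this
      omega
    obtain ⟨g₂, hg₂, hMg₂⟩ := exists_edge_end q hq
    have hnodup := hd.edges_nodup
    rw [SimpleGraph.Walk.edges_cons, List.nodup_cons] at hnodup
    exact ⟨s(M, b), g₂, by simp, by simp [hg₂], fun heq => hnodup.1 (heq ▸ hg₂),
      Sym2.mem_mk_left M b, hMg₂⟩

end Aux2

/-- For a chordal graph with a perfect elimination ordering, a set of edges is nbc if and only
if all of its edges have distinct larger endpoints. -/
theorem stmt_1 {V : Type*} [Fintype V] [LinearOrder V] (G : SimpleGraph V)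
    (hchordal : G.IsChordal) (hpeo : IsPEO G) (S : Finset (Sym2 V)) (hS : ↑S ⊆ G.edgeSet) :
    IsNBC G S ↔ ∀ e ∈ S, ∀ f ∈ S, e ≠ f → esup e ≠ esup f := by
  constructor
  · rintro ⟨-, hnbc⟩ e he f hf hef hsup
    have heE : e ∈ G.edgeSet := hS he
    have hfE : f ∈ G.edgeSet := hS hf
    set v := esup e with hv
    set u := einf e with hu
    set w := einf f with hw
    have heq : e = s(u, v) := by rw [hu, hv]; exact eq_mk_einf_esup e
    have hfq : f = s(w, v) := by rw [hsup, hw]; exact eq_mk_einf_esup f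
    have huv : u < v := by rw [hu, hv]; exact einf_lt_esup heE
    have hwv : w < v := by rw [hw, hsup]; exact einf_lt_esup hfE
    have huw : u ≠ w := fun h => hef (by rw [heq, hfq, h])
    have hadj_uv : G.Adj u v := by rwa [heq, SimpleGraph.mem_edgeSet] at heE
    have hadj_wv : G.Adj w v := by rwa [hfq, SimpleGraph.mem_edgeSet] at hfE
    have hadj_uw : G.Adj u w := hpeo v u w huv hwv huw hadj_uv hadj_wv
    have hvu : v ≠ u := huv.ne'
    have hvw : v ≠ w := hwv.ne'
    have huv' : u ≠ v := huv.ne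
    have hwv' : w ≠ v := hwv.ne
    have hwu : w ≠ u := huw.symm
    let c : G.Walk v v :=
      .cons hadj_uv.symm (.cons hadj_uw (.cons hadj_wv .nil))
    have hcyc : c.IsCycle := by
      refine ⟨⟨⟨?_⟩, by simp [c]⟩, ?_⟩
      · simp only [c, SimpleGraph.Walk.edges_cons, SimpleGraph.Walk.edges_nil,
          List.nodup_cons, List.mem_cons, List.not_mem_nil, or_false, List.nodup_nil,
          and_true, List.mem_singleton, Sym2.mk_eq_mk_iff, Prod.mk.injEq,
          Prod.swap_prod_mk, not_or]
        simp only [Sym2.eq_iff]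
        tauto
      · simp only [c, SimpleGraph.Walk.support_cons, SimpleGraph.Walk.support_nil,
          List.tail_cons, List.nodup_cons, List.mem_cons, List.not_mem_nil,
          List.mem_singleton, List.nodup_nil, and_true, or_false, not_or]
        tauto
    apply hnbc {e, f} (by simp [Finset.insert_subset_iff, he, hf])
    refine ⟨s(u, w), ?_, ?_, v, c, hcyc, ?_⟩
    · intro hmem
      have hvv : esup s(u, w) = v := by
        rcases Finset.mem_insert.1 hmem with h | h
        · rw [h, hv]
        · rw [Finset.mem_singleton.1 h]; exact hsup.symm
      rw [esup_mk] at hvv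
      exact absurd hvv (ne_of_lt (sup_lt_iff.2 ⟨huv, hwv⟩))
    · intro f' hf'
      left
      have hvv : esup f' = v := by
        rcases Finset.mem_insert.1 hf' with h | h
        · rw [h, hv]
        · rw [Finset.mem_singleton.1 h]; exact hsup.symm
      rw [hvv, esup_mk]
      exact sup_lt_iff.2 ⟨huv, hwv⟩
    · rw [heq, hfq]
      ext g
      simp only [c, SimpleGraph.Walk.edges_cons, SimpleGraph.Walk.edges_nil,
        List.toFinset_cons, List.toFinset_nil, LawfulSingleton.insert_empty_eq, Finset.mem_insert,
        Finset.mem_singleton]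
      have hsw : s(v, u) = s(u, v) := Sym2.eq_swap
      rw [hsw]
      tauto
  · intro hdist
    refine ⟨hS, ?_⟩
    rintro T hTS ⟨e, heT, hlt, v, c, hcyc, hedges⟩
    have hsne : c.support.toFinset.Nonempty := ⟨v, by simp [c.start_mem_support]⟩
    set M := c.support.toFinset.max' hsne with hM
    have hMmem : M ∈ c.support := by
      have := c.support.toFinset.max'_mem hsne
      simpa using this
    have hMmax : ∀ x ∈ c.support, x ≤ M :=
      fun x hx => Finset.le_max' _ x (by simpa using hx)
    have hdcyc : (c.rotate M hMmem).IsCycle := hcyc.rotate hMmem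
    obtain ⟨g₁, g₂, hg₁, hg₂, hne, hMg₁, hMg₂⟩ := cycle_two_edges hdcyc
    have hperm := (c.rotate_edges M hMmem).perm
    have hg₁c : g₁ ∈ c.edges := hperm.mem_iff.1 hg₁
    have hg₂c : g₂ ∈ c.edges := hperm.mem_iff.1 hg₂
    have hsupM : ∀ g ∈ c.edges, esup g ≤ M := by
      intro g hg
      have hmem : s(einf g, esup g) ∈ c.edges := (eq_mk_einf_esup g) ▸ hg
      exact hMmax _ (c.snd_mem_support_of_mem_edges hmem)
    have hsupg₁ : esup g₁ = M := le_antisymm (hsupM g₁ hg₁c) (le_esup_of_mem hMg₁)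
    have hsupg₂ : esup g₂ = M := le_antisymm (hsupM g₂ hg₂c) (le_esup_of_mem hMg₂)
    have hg₁' : g₁ ∈ insert e T := by rw [← hedges]; simpa using hg₁c
    have hg₂' : g₂ ∈ insert e T := by rw [← hedges]; simpa using hg₂c
    have key : ∃ f ∈ T, esup f = M ∧ esup e = M := by
      rcases Finset.mem_insert.1 hg₁' with rfl | h1
      · rcases Finset.mem_insert.1 hg₂' with rfl | h2
        · exact absurd rfl hne
        · exact ⟨g₂, h2, hsupg₂, hsupg₁⟩
      · rcases Finset.mem_insert.1 hg₂' with rfl | h2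
        · exact ⟨g₁, h1, hsupg₁, hsupg₂⟩
        · exact absurd (hsupg₁.trans hsupg₂.symm)
            (hdist g₁ (hTS h1) g₂ (hTS h2) hne)
    obtain ⟨f, hfT, hfM, heM⟩ := key
    have hcard : 3 ≤ (insert e T).card := by
      rw [← hedges, List.toFinset_card_of_nodup hcyc.edges_nodup,
        SimpleGraph.Walk.length_edges]
      exact hcyc.three_le_length
    have hTcard : 1 < T.card := by
      have := Finset.card_insert_le e T
      omega
    obtain ⟨f', hf'T, hf'ne⟩ := Finset.exists_mem_ne hTcard f
    have hf'c : f' ∈ c.edges := by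
      have : f' ∈ insert e T := Finset.mem_insert_of_mem hf'T
      rw [← hedges] at this
      simpa using this
    have hf'le : esup f' ≤ M := hsupM f' hf'c
    rcases hlt f' hf'T with h | ⟨h, -⟩
    · rw [heM] at h
      exact absurd h (not_lt.2 hf'le)
    · exact hdist f' (hTS hf'T) f (hTS hfT) hf'ne (by rw [← h, heM, hfM])
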